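/- Let B = [b_{i₁,…,i_d}] ∈ ℝ₊^{m₁×⋯×m_d} (d ≥ 2, each m_j ≥ 2) be a nonnegative tensor with no zero slice, and let s_k ∈ ℝ^{m_k}, k ∈ [d], be positive vectors satisfying the compatibility condition. Let P₀ : U(s₁,…,s_d) → V₀(s₁,…,s_d)^⊥ be the orthogonal projection, and for j ∈ [d] let W_j = {P₀(0,x_j) : x_j ∈ L(s_j)}, where (0,x_j) denotes the element of U(s₁,…,s_d) with j-th block x_j and all other blocks zero. Then dim W_j = m_j − 1 for every j ∈ [d]. -/

import Mathlib

section

variable {d : ℕ} {m : Fin d → ℕ}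

/-- The subspace `U(s₁,…,s_d) = {x : sₖᵀxₖ = 0 for all k}` of
`ℝ^{m₁} × ⋯ × ℝ^{m_d}`, realized inside `EuclideanSpace ℝ ((k : Fin d) × Fin (m k))`. -/
noncomputable def Usub (s : (k : Fin d) → Fin (m k) → ℝ) :
    Submodule ℝ (EuclideanSpace ℝ ((k : Fin d) × Fin (m k))) where
  carrier := {x | ∀ k : Fin d, ∑ i : Fin (m k), s k i * x ⟨k, i⟩ = 0}
  add_mem' := by
    intro a b ha hb k
    simp only [PiLp.add_apply, mul_add, Finset.sum_add_distrib, ha k, hb k, add_zero]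
  zero_mem' := by intro k; simp
  smul_mem' := by
    intro c a ha k
    have : ∀ i : Fin (m k), s k i * (c • a) ⟨k, i⟩ = c * (s k i * a ⟨k, i⟩) := by
      intro i; simp [PiLp.smul_apply, smul_eq_mul]; ring
    simp only [this, ← Finset.mul_sum, ha k, mul_zero]

/-- The subspace `V(s₁,…,s_d) = {x : x₁(i₁) + ⋯ + x_d(i_d) = 0 whenever B i > 0}`. -/
noncomputable def Vsub (B : ((j : Fin d) → Fin (m j)) → ℝ) :
    Submodule ℝ (EuclideanSpace ℝ ((k : Fin d) × Fin (m k))) where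
  carrier := {x | ∀ i : (j : Fin d) → Fin (m j), 0 < B i → ∑ k : Fin d, x ⟨k, i k⟩ = 0}
  add_mem' := by
    intro a b ha hb i hi
    simp only [PiLp.add_apply, Finset.sum_add_distrib, ha i hi, hb i hi, add_zero]
  zero_mem' := by intro i _; simp
  smul_mem' := by
    intro c a ha i hi
    have : ∀ k : Fin d, (c • a) ⟨k, i k⟩ = c * a ⟨k, i k⟩ := by
      intro k; simp [PiLp.smul_apply, smul_eq_mul]
    simp only [this, ← Finset.mul_sum, ha i hi, mul_zero]

/-- The orthogonal complement `V₀(s₁,…,s_d)^⊥` of `V₀ = V ∩ U` inside `U`. -/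
noncomputable def V0perp (B : ((j : Fin d) → Fin (m j)) → ℝ)
    (s : (k : Fin d) → Fin (m k) → ℝ) :
    Submodule ℝ (EuclideanSpace ℝ ((k : Fin d) × Fin (m k))) :=
  Usub s ⊓ (Vsub B ⊓ Usub s)ᗮ

/-- The copy of `L(s_j)` inside `U(s₁,…,s_d)`: vectors supported on the `j`-th block
whose `j`-th block lies in `L(s_j) = {x_j : s_jᵀx_j = 0}`. -/
noncomputable def Lblock (s : (k : Fin d) → Fin (m k) → ℝ) (j : Fin d) :
    Submodule ℝ (EuclideanSpace ℝ ((k : Fin d) × Fin (m k))) where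
  carrier := {x | (∑ i : Fin (m j), s j i * x ⟨j, i⟩ = 0) ∧
    ∀ p : (k : Fin d) × Fin (m k), p.1 ≠ j → x p = 0}
  add_mem' := by
    intro a b ha hb
    refine ⟨?_, ?_⟩
    · simp only [PiLp.add_apply, mul_add, Finset.sum_add_distrib, ha.1, hb.1, add_zero]
    · intro p hp; simp [PiLp.add_apply, ha.2 p hp, hb.2 p hp]
  zero_mem' := ⟨by simp, by intro p _; simp⟩
  smul_mem' := by
    intro c a ha
    refine ⟨?_, ?_⟩
    · have : ∀ i : Fin (m j), s j i * (c • a) ⟨j, i⟩ = c * (s j i * a ⟨j, i⟩) := by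
        intro i; simp [PiLp.smul_apply, smul_eq_mul]; ring
      simp only [this, ← Finset.mul_sum, ha.1, mul_zero]
    · intro p hp; simp [PiLp.smul_apply, ha.2 p hp]

/-- The orthogonal projection of the ambient space onto `V₀(s₁,…,s_d)^⊥`, as a linear
map into the ambient space. -/
noncomputable def P0 (B : ((j : Fin d) → Fin (m j)) → ℝ)
    (s : (k : Fin d) → Fin (m k) → ℝ) :
    EuclideanSpace ℝ ((k : Fin d) × Fin (m k)) →ₗ[ℝ]
      EuclideanSpace ℝ ((k : Fin d) × Fin (m k)) :=
  (V0perp B s).subtype ∘ₗ (Submodule.orthogonalProjection (V0perp B s)).toLinearMap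

/-- The subspace `W_j = P₀({(0, x_j) : x_j ∈ L(s_j)}) ⊆ V₀(s₁,…,s_d)^⊥`. -/
noncomputable def Wsub (B : ((j : Fin d) → Fin (m j)) → ℝ)
    (s : (k : Fin d) → Fin (m k) → ℝ) (j : Fin d) :
    Submodule ℝ (EuclideanSpace ℝ ((k : Fin d) × Fin (m k))) :=
  Submodule.map (P0 B s) (Lblock s j)


/-- The linear functional `y ↦ ∑ i, s j i * y i`. -/
private noncomputable def sumFunc (s : (k : Fin d) → Fin (m k) → ℝ) (j : Fin d) :
    (Fin (m j) → ℝ) →ₗ[ℝ] ℝ where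
  toFun y := ∑ i, s j i * y i
  map_add' a b := by simp [mul_add, Finset.sum_add_distrib]
  map_smul' c a := by simp [smul_eq_mul, Finset.mul_sum, mul_left_comm]

/-- Inclusion of `ℝ^{m j}` as the `j`-th block of the ambient space. -/
private noncomputable def blockIncl (j : Fin d) :
    (Fin (m j) → ℝ) →ₗ[ℝ] EuclideanSpace ℝ ((k : Fin d) × Fin (m k)) where
  toFun y := WithLp.toLp 2 fun p : (k : Fin d) × Fin (m k) => if h : p.1 = j then y (Fin.cast (congrArg m h) p.2) else 0
  map_add' a b := by
    ext p
    simp only [PiLp.add_apply]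
    by_cases h : p.1 = j <;> simp [h]
  map_smul' c a := by
    ext p
    simp only [PiLp.smul_apply]
    by_cases h : p.1 = j <;> simp [h]

private lemma blockIncl_apply_same (j : Fin d) (y : Fin (m j) → ℝ) (i : Fin (m j)) :
    blockIncl j y ⟨j, i⟩ = y i := by
  show dite _ _ _ = _
  rw [dif_pos rfl]
  exact congrArg y (Fin.cast_eq_self i)

private lemma blockIncl_injective (j : Fin d) :
    Function.Injective (blockIncl (m := m) j) := by
  intro a b hab
  funext i
  have : blockIncl j a ⟨j, i⟩ = blockIncl j b ⟨j, i⟩ := by rw [hab]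
  rwa [blockIncl_apply_same, blockIncl_apply_same] at this

private lemma Lblock_eq_map (s : (k : Fin d) → Fin (m k) → ℝ) (j : Fin d) :
    Lblock s j = Submodule.map (blockIncl j) (LinearMap.ker (sumFunc s j)) := by
  ext x
  constructor
  · rintro ⟨hx1, hx2⟩
    refine ⟨fun i => x ⟨j, i⟩, ?_, ?_⟩
    · simpa [sumFunc] using hx1
    · ext p
      obtain ⟨k, ik⟩ := p
      by_cases h : k = j
      · subst h
        rw [blockIncl_apply_same]
      · show dite _ _ _ = _
        rw [dif_neg h, eq_comm]
        exact hx2 ⟨k, ik⟩ h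
  · rintro ⟨y, hy, rfl⟩
    refine ⟨?_, ?_⟩
    · have : ∀ i : Fin (m j), blockIncl j y ⟨j, i⟩ = y i := blockIncl_apply_same j y
      simp only [this]
      simpa [sumFunc] using hy
    · intro p hp
      show dite _ _ _ = _
      rw [dif_neg hp]

private lemma finrank_Lblock (s : (k : Fin d) → Fin (m k) → ℝ) (hs : ∀ k i, 0 < s k i)
    (hm : ∀ j, 2 ≤ m j) (j : Fin d) :
    Module.finrank ℝ (Lblock s j) = m j - 1 := by
  rw [Lblock_eq_map s j,
    ← LinearEquiv.finrank_eq
      (Submodule.equivMapOfInjective _ (blockIncl_injective j) (LinearMap.ker (sumFunc s j)))]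
  have hsurj : Function.Surjective (sumFunc s j) := by
    intro c
    haveI : NeZero (m j) := ⟨by have := hm j; omega⟩
    have hpos : (0 : ℝ) < ∑ i : Fin (m j), s j i :=
      Finset.sum_pos (fun i _ => hs j i) Finset.univ_nonempty
    refine ⟨fun _ => c / (∑ i : Fin (m j), s j i), ?_⟩
    show (∑ i : Fin (m j), s j i * (c / (∑ i : Fin (m j), s j i))) = c
    rw [← Finset.sum_mul]
    field_simp
  have h := LinearMap.finrank_range_add_finrank_ker (sumFunc s j)
  rw [LinearMap.range_eq_top.mpr hsurj, finrank_top, Module.finrank_self,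
    Module.finrank_fin_fun] at h
  omega

private lemma Lblock_le_Usub (s : (k : Fin d) → Fin (m k) → ℝ) (j : Fin d) :
    Lblock s j ≤ Usub s := by
  rintro x ⟨hx1, hx2⟩ k
  by_cases h : k = j
  · subst h; exact hx1
  · have : ∀ i : Fin (m k), s k i * x ⟨k, i⟩ = 0 := fun i => by
      rw [hx2 ⟨k, i⟩ h, mul_zero]
    simp [this]

/-- Lemma 4.1 (1) of the paper. For every `j ∈ [d]`,
`dim W_j = m_j − 1`. -/
theorem dim_Wj {d : ℕ} {m : Fin d → ℕ} (hd : 2 ≤ d)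
    (hm : ∀ j, 2 ≤ m j)
    (B : ((j : Fin d) → Fin (m j)) → ℝ)
    (hB : ∀ i, 0 ≤ B i)
    (hslice : ∀ (k : Fin d) (ik : Fin (m k)),
      ∃ i : (j : Fin d) → Fin (m j), i k = ik ∧ B i ≠ 0)
    (s : (k : Fin d) → Fin (m k) → ℝ) (hs : ∀ k i, 0 < s k i)
    (hcompat : ∀ k l : Fin d, ∑ i, s k i = ∑ i, s l i) :
    ∀ j : Fin d, Module.finrank ℝ (Wsub B s j) = m j - 1 := by
  intro j
  classical
  set E := EuclideanSpace ℝ ((k : Fin d) × Fin (m k))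
  set V0 : Submodule ℝ E := Vsub B ⊓ Usub s with hV0
  -- the key injectivity: Lblock ∩ ker P0 = ⊥
  have hker : ∀ x ∈ Lblock s j, P0 B s x = 0 → x = 0 := by
    intro x hx hPx
    -- x ∈ (V0perp B s)ᗮ
    have hxperp : x ∈ (V0perp B s)ᗮ := by
      have : Submodule.orthogonalProjection (V0perp B s) x = 0 := by
        have : ((Submodule.orthogonalProjection (V0perp B s) x : V0perp B s) : E) = 0 := hPx
        exact Subtype.ext this
      exact Submodule.orthogonalProjectionOnto_eq_zero_iff.mp this
    have hxU : x ∈ Usub s := Lblock_le_Usub s j hx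
    set p : E := (Submodule.orthogonalProjection V0 x : E) with hp
    have hpV0 : p ∈ V0 := (Submodule.orthogonalProjection V0 x).2
    set q : E := x - p with hq
    have hqV0perp : q ∈ V0ᗮ := Submodule.sub_starProjection_mem_orthogonal (K := V0) x
    have hqmem : q ∈ V0perp B s :=
      ⟨Submodule.sub_mem _ hxU hpV0.2, hqV0perp⟩
    have hq0 : q = 0 := by
      have h1 : inner ℝ q x = (0 : ℝ) :=
        (Submodule.mem_orthogonal _ x).mp hxperp q hqmem
      have h2 : inner ℝ q p = (0 : ℝ) := by
        rw [real_inner_comm]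
        exact hqV0perp p hpV0
      have h3 : inner ℝ q q = (0 : ℝ) := by
        have : x = p + q := by rw [hq]; abel
        rw [this, inner_add_right, h2, zero_add] at h1
        exact h1
      exact inner_self_eq_zero.mp h3
    have hxV0 : x ∈ V0 := by
      have : x = p := by
        rw [hq] at hq0
        exact sub_eq_zero.mp hq0
      rw [this]; exact hpV0
    -- x ∈ Vsub B and x supported on block j forces x = 0
    ext pt
    obtain ⟨k, ik⟩ := pt
    by_cases h : k = j
    · subst h
      obtain ⟨i, hi1, hi2⟩ := hslice k ik
      have hBi : 0 < B i := lt_of_le_of_ne (hB i) (Ne.symm hi2)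
      have hsum := hxV0.1 i hBi
      have hone : ∑ l : Fin d, x ⟨l, i l⟩ = x ⟨k, i k⟩ :=
        Finset.sum_eq_single k (fun l _ hl => hx.2 ⟨l, i l⟩ hl) (by simp)
      rw [hone] at hsum
      have : (⟨k, i k⟩ : (l : Fin d) × Fin (m l)) = ⟨k, ik⟩ := by rw [hi1]
      rw [this] at hsum
      exact hsum
    · exact hx.2 ⟨k, ik⟩ h
  -- now compute the rank
  have hWj : Wsub B s j = LinearMap.range (P0 B s ∘ₗ (Lblock s j).subtype) := by
    rw [LinearMap.range_comp, Submodule.range_subtype]; rfl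
  have hkerbot : LinearMap.ker (P0 B s ∘ₗ (Lblock s j).subtype) = ⊥ := by
    rw [LinearMap.ker_eq_bot']
    intro v hv
    exact Subtype.ext (hker v v.2 hv)
  have h := LinearMap.finrank_range_add_finrank_ker (P0 B s ∘ₗ (Lblock s j).subtype)
  rw [hkerbot, finrank_bot] at h
  rw [show Module.finrank ℝ (Wsub B s j) =
      Module.finrank ℝ (LinearMap.range (P0 B s ∘ₗ (Lblock s j).subtype)) from by rw [hWj]]
  rw [add_zero] at h
  rw [h, finrank_Lblock s hs hm j]


end
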